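/- Let G be a finite 3-regular graph with oriented edges, C the set of all cycles of G, and φ : Z̃(G) → ℤ^C the ℤ-linear map defined on basis elements by φ(E^{e,f}) = Σ_{c ∋ e,f} ε_c^{e,f} c. Then for every vertex v and every edge e not incident to v, φ(Ṽ^{v,e}) = 0, where Ṽ^{v,e} = Σ_{f incident to v} δ^{v,f} E^{e,f}. -/
import Mathlib


/-- A cycle of length `k` in the graph with vertex set `V`, edge set `E` and
source/target maps `s t : E → V`: `k` distinct vertices and `k` distinct edges
with `{s(eᵢ), t(eᵢ)} = {vᵢ, vᵢ₊₁}` (indices mod `k`). -/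
structure GCycle {V E : Type*} (s t : E → V) (k : ℕ) where
  pos : 0 < k
  vtx : ZMod k → V
  edg : ZMod k → E
  vtx_inj : Function.Injective vtx
  edg_inj : Function.Injective edg
  ends : ∀ i, ({s (edg i), t (edg i)} : Set V) = {vtx i, vtx (i + 1)}

/-- A cycle of the graph (of some length). -/
abbrev GraphCycle {V E : Type*} (s t : E → V) : Type _ := (k : ℕ) × GCycle s t k

/-- The edge `e` belongs to the cycle `c`. -/
def GraphCycle.memE {V E : Type*} {s t : E → V} (c : GraphCycle s t) (e : E) : Prop :=
  ∃ i, c.2.edg i = e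

open Classical in
/-- The map `C* : ℤ^{E(G)} → ℤ^C`, sending each edge `e` to the sum of the
cycles in `C` containing `e`, extended `ℤ`-linearly. -/
noncomputable def cycleMap {V E : Type*} [Fintype E] (s t : E → V)
    (C : Set (GraphCycle s t)) (x : E → ℤ) : C → ℤ :=
  fun c => ∑ e : E, if (c : GraphCycle s t).memE e then x e else 0

open Classical

/-- The set of all cycles of the graph, as subgraphs: a cycle subgraph is a pair
(vertex set, edge set) arising from some cycle. -/
abbrev CycleSub {V E : Type*} (s t : E → V) : Type _ :=
  {p : Set V × Set E // ∃ (k : ℕ) (c : GCycle s t k),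
      Set.range c.vtx = p.1 ∧ Set.range c.edg = p.2}

/-- `ε_c^{e,f} ∈ {±1}` for a cycle subgraph `c` containing the edges `e, f`:
it is `+1` iff `e` and `f` have matching orientation along `c`, i.e. iff for some
(equivalently, any) parametrization of `c` the edges `e` and `f` match the same
traversal direction. -/
noncomputable def epsSub {V E : Type*} (s t : E → V) (p : CycleSub s t) (e f : E) : ℤ :=
  if ∃ (k : ℕ) (c : GCycle s t k) (i j : ZMod k),
      Set.range c.vtx = p.1.1 ∧ Set.range c.edg = p.1.2 ∧
      c.edg i = e ∧ c.edg j = f ∧ ((s e = c.vtx i) ↔ (s f = c.vtx j))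
    then 1 else -1

/-- The value of `φ` on the generator `E^{e,f}` of `Z̃(G)`: the vector in `ℤ^C`
(`C` = all cycles of `G`) whose `c`-coordinate is `ε_c^{e,f}` if `c` contains both
`e` and `f`, and `0` otherwise. -/
noncomputable def phiGen {V E : Type*} (s t : E → V) (e f : E) : CycleSub s t → ℤ :=
  fun p => if e ∈ p.1.2 ∧ f ∈ p.1.2 then epsSub s t p e f else 0

section Aux

variable {V E : Type*} {s t : E → V}

lemma zmod_one_ne_zero {k : ℕ} (hk : 2 ≤ k) : (1 : ZMod k) ≠ 0 := by
  intro h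
  have h' : ((1 : ℕ) : ZMod k) = 0 := by exact_mod_cast h
  have h2 := (CharP.cast_eq_zero_iff (ZMod k) k 1).mp h'
  have := Nat.le_of_dvd one_pos h2
  omega

lemma zmod_two_ne_zero {k : ℕ} (hk : 3 ≤ k) : (2 : ZMod k) ≠ 0 := by
  intro h
  have h' : ((2 : ℕ) : ZMod k) = 0 := by exact_mod_cast h
  have h2 := (CharP.cast_eq_zero_iff (ZMod k) k 2).mp h'
  have := Nat.le_of_dvd (by norm_num) h2
  omega

lemma zmod_prop_const {k : ℕ} (hk : 0 < k) (D : ZMod k → Prop)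
    (h : ∀ i, D i ↔ D (i + 1)) (i : ZMod k) : D i ↔ D 0 := by
  haveI : NeZero k := ⟨by omega⟩
  have key : ∀ n : ℕ, D ((n : ℕ) : ZMod k) ↔ D 0 := by
    intro n
    induction n with
    | zero => simp
    | succ m ih =>
      have hc : (((m + 1 : ℕ)) : ZMod k) = ((m : ℕ) : ZMod k) + 1 := by push_cast; ring
      rw [hc]
      exact (h _).symm.trans ih
  have hval : ((i.val : ℕ) : ZMod k) = i := ZMod.natCast_rightInverse i
  rw [← hval]; exact key _

lemma three_le_of_distinct {k : ℕ} (hk : 0 < k) {x y z : ZMod k}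
    (hxy : x ≠ y) (hxz : x ≠ z) (hyz : y ≠ z) : 3 ≤ k := by
  haveI : NeZero k := ⟨by omega⟩
  have h1 : ({x, y, z} : Finset (ZMod k)).card = 3 := by
    rw [Finset.card_insert_of_notMem (by simp [hxy, hxz]),
      Finset.card_insert_of_notMem (by simp [hyz]), Finset.card_singleton]
  have h2 := Finset.card_le_univ ({x, y, z} : Finset (ZMod k))
  rwa [h1, ZMod.card] at h2

lemma GCycle.nonloop {k : ℕ} (c : GCycle s t k) (hk : 2 ≤ k) (j : ZMod k) :
    s (c.edg j) ≠ t (c.edg j) := by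
  intro h
  have h1 : c.vtx j ∈ ({s (c.edg j), t (c.edg j)} : Set V) := by
    rw [c.ends j]; exact Set.mem_insert _ _
  have h2 : c.vtx (j + 1) ∈ ({s (c.edg j), t (c.edg j)} : Set V) := by
    rw [c.ends j]; exact Set.mem_insert_of_mem _ rfl
  rw [h] at h1 h2
  simp only [Set.mem_insert_iff, Set.mem_singleton_iff, or_self] at h1 h2
  have h3 := c.vtx_inj (h1.trans h2.symm)
  exact zmod_one_ne_zero hk (add_eq_left.mp h3.symm)

lemma GCycle.pos_of_incident {k : ℕ} (c : GCycle s t k) {v : V} {f : E} {j i0 : ZMod k}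
    (hj : c.edg j = f) (hi0 : c.vtx i0 = v) (hvf : v ∈ ({s f, t f} : Set V)) :
    j = i0 ∨ j + 1 = i0 := by
  subst hj; subst hi0
  rw [c.ends j] at hvf
  simp only [Set.mem_insert_iff, Set.mem_singleton_iff] at hvf
  rcases hvf with h | h
  · exact Or.inl (c.vtx_inj h.symm)
  · exact Or.inr (c.vtx_inj h.symm)

lemma GCycle.star {k : ℕ} (c : GCycle s t k) {v : V} {i0 : ZMod k} (hi0 : c.vtx i0 = v)
    {a b : E} (hab : a ≠ b) {ja jb : ZMod k} (hja : c.edg ja = a) (hjb : c.edg jb = b)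
    (hva : v ∈ ({s a, t a} : Set V)) (hvb : v ∈ ({s b, t b} : Set V)) :
    ((s a = c.vtx ja) ↔ (s b = c.vtx jb)) ↔ ¬((s a = v) ↔ (s b = v)) := by
  have hjab : ja ≠ jb := fun h => hab (by rw [← hja, h, hjb])
  have fwd2 : ∀ (f : E) (j : ZMod k), c.edg j = f → j + 1 = i0 → j ≠ i0 →
      v ∈ ({s f, t f} : Set V) → ((s f = c.vtx j) ↔ ¬(s f = v)) := by
    intro f j hj hj1 hjne hvf
    have hne : c.vtx j ≠ v := fun h => hjne (c.vtx_inj (h.trans hi0.symm))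
    constructor
    · intro h1 h2; exact hne (by rw [← h1, h2])
    · intro h1
      have hsf : s f ∈ ({s f, t f} : Set V) := Set.mem_insert _ _
      rw [← hj, c.ends j, hj] at hsf
      simp only [Set.mem_insert_iff, Set.mem_singleton_iff] at hsf
      rcases hsf with h2 | h2
      · exact h2
      · exact absurd (by rw [h2, hj1, hi0]) h1
  rcases c.pos_of_incident hja hi0 hva with h1 | h1 <;>
    rcases c.pos_of_incident hjb hi0 hvb with h2 | h2
  · exact absurd (h1.trans h2.symm) hjab
  · have hbne : jb ≠ i0 := fun h => hjab (h1.trans h.symm)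
    have hA : (s a = c.vtx ja) ↔ (s a = v) := by rw [h1, hi0]
    rw [hA, fwd2 b jb hjb h2 hbne hvb]; tauto
  · have hane : ja ≠ i0 := fun h => hjab (h.trans h2.symm)
    have hB : (s b = c.vtx jb) ↔ (s b = v) := by rw [h2, hi0]
    rw [hB, fwd2 a ja hja h1 hane hva]; tauto
  · exact absurd (add_right_cancel (h1.trans h2.symm)) hjab

lemma key_arith (P1 P2 R1 R2 : Prop) (h : (P1 ↔ P2) ↔ ¬(R1 ↔ R2)) :
    (if P1 then (1 : ℤ) else -1) * (if R1 then 1 else -1) +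
      (if P2 then 1 else -1) * (if R2 then 1 else -1) = 0 := by
  by_cases p1 : P1 <;> by_cases p2 : P2 <;> by_cases r1 : R1 <;> by_cases r2 : R2 <;>
    simp_all

end Aux
section Invar

variable {V E : Type*} {s t : E → V}

lemma GCycle.invar {k k' : ℕ} (c : GCycle s t k) (c' : GCycle s t k')
    (hV : Set.range c.vtx = Set.range c'.vtx) (hE : Set.range c.edg = Set.range c'.edg)
    (hk : 3 ≤ k) {g h : E} {ig ih' : ZMod k} {jg jh : ZMod k'}
    (hg : c.edg ig = g) (hh : c.edg ih' = h) (hg' : c'.edg jg = g) (hh' : c'.edg jh = h) :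
    ((s g = c.vtx ig) ↔ (s h = c.vtx ih')) ↔ ((s g = c'.vtx jg) ↔ (s h = c'.vtx jh)) := by
  have hkk : k = k' := by
    have h1 : Nat.card (ZMod k) = Nat.card (ZMod k') := by
      rw [← Nat.card_range_of_injective c.edg_inj, ← Nat.card_range_of_injective c'.edg_inj, hE]
    simpa [Nat.card_zmod] using h1
  subst hkk
  have hmemV : ∀ i, c.vtx i ∈ Set.range c'.vtx := fun i => hV ▸ ⟨i, rfl⟩
  have hmemE : ∀ i, c.edg i ∈ Set.range c'.edg := fun i => hE ▸ ⟨i, rfl⟩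
  set ψ : ZMod k → ZMod k := fun i => Function.invFun c'.vtx (c.vtx i) with hψdef
  set θ : ZMod k → ZMod k := fun i => Function.invFun c'.edg (c.edg i) with hθdef
  have hψ : ∀ i, c'.vtx (ψ i) = c.vtx i := fun i => Function.invFun_eq (hmemV i)
  have hθ : ∀ i, c'.edg (θ i) = c.edg i := fun i => Function.invFun_eq (hmemE i)
  have hψinj : Function.Injective ψ := fun i j hij => c.vtx_inj (by rw [← hψ i, ← hψ j, hij])
  have step : ∀ i, (ψ (i + 1) = ψ i + 1 ∧ θ i = ψ i) ∨
      (ψ (i + 1) = ψ i - 1 ∧ θ i = ψ i - 1) := by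
    intro i
    have hpair : ({c'.vtx (θ i), c'.vtx (θ i + 1)} : Set V) =
        {c'.vtx (ψ i), c'.vtx (ψ (i + 1))} := by
      rw [← c'.ends (θ i), hθ i, c.ends i, hψ, hψ]
    rw [Set.pair_eq_pair_iff] at hpair
    rcases hpair with ⟨e1, e2⟩ | ⟨e1, e2⟩
    · have h1 := c'.vtx_inj e1
      have h2 := c'.vtx_inj e2
      exact Or.inl ⟨by rw [← h2, h1], h1⟩
    · have h1 := c'.vtx_inj e1
      have h2 := c'.vtx_inj e2
      have h3 : θ i = ψ i - 1 := by rw [← h2]; ring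
      exact Or.inr ⟨by rw [← h1, h3], h3⟩
  have h2ne : (2 : ZMod k) ≠ 0 := zmod_two_ne_zero hk
  have h1ne : (1 : ZMod k) ≠ 0 := zmod_one_ne_zero (by omega)
  have habs : ∀ i : ZMod k, i + 1 + 1 ≠ i := by
    intro i hi
    apply h2ne
    have h' : i + (1 + 1) = i := by rw [← add_assoc]; exact hi
    have := add_eq_left.mp h'
    rwa [one_add_one_eq_two] at this
  have hstep2 : ∀ i : ZMod k, (ψ (i + 1) = ψ i + 1) ↔ (ψ (i + 1 + 1) = ψ (i + 1) + 1) := by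
    intro i
    constructor
    · intro hD
      rcases step (i + 1) with ⟨h', _⟩ | ⟨h', _⟩
      · exact h'
      · exfalso
        have : ψ (i + 1 + 1) = ψ i := by rw [h', hD]; ring
        exact habs i (hψinj this)
    · intro hD
      rcases step i with ⟨h', _⟩ | ⟨h', _⟩
      · exact h'
      · exfalso
        have : ψ (i + 1 + 1) = ψ i := by rw [hD, h']; ring
        exact habs i (hψinj this)
  have hconst := zmod_prop_const c.pos (fun i => ψ (i + 1) = ψ i + 1) hstep2
  have hne11 : ∀ x : ZMod k, x + 1 ≠ x - 1 := by
    intro x hx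
    apply h2ne
    have : x + 1 - (x - 1) = 0 := by rw [hx]; ring
    calc (2 : ZMod k) = x + 1 - (x - 1) := by ring
    _ = 0 := this
  by_cases hD0 : ψ (0 + 1) = ψ 0 + 1
  · have hθψ : ∀ i, θ i = ψ i := by
      intro i
      rcases step i with ⟨_, h'⟩ | ⟨hd, _⟩
      · exact h'
      · exfalso
        have hDi : ψ (i + 1) = ψ i + 1 := (hconst i).mpr hD0
        exact hne11 (ψ i) (hDi.symm.trans hd)
    have hvg : c'.vtx jg = c.vtx ig := by
      have hjgθ : jg = θ ig := c'.edg_inj (by rw [hg', hθ, hg])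
      rw [hjgθ, hθψ, hψ]
    have hvh : c'.vtx jh = c.vtx ih' := by
      have hjhθ : jh = θ ih' := c'.edg_inj (by rw [hh', hθ, hh])
      rw [hjhθ, hθψ, hψ]
    rw [hvg, hvh]
  · have hθψ : ∀ i, c'.vtx (θ i) = c.vtx (i + 1) := by
      intro i
      rcases step i with ⟨hd, _⟩ | ⟨hd, h'⟩
      · exact absurd ((hconst i).mp hd) hD0
      · have : θ i = ψ (i + 1) := by rw [h', hd]
        rw [this, hψ]
    have flip : ∀ (f : E) (i j : ZMod k), c.edg i = f → c'.edg j = f →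
        ((s f = c'.vtx j) ↔ ¬(s f = c.vtx i)) := by
      intro f i j hi hj
      have hjθ : j = θ i := c'.edg_inj (by rw [hj, hθ, hi])
      rw [hjθ, hθψ i]
      have hvne : c.vtx i ≠ c.vtx (i + 1) := by
        intro hcc
        have := c.vtx_inj hcc
        exact h1ne (add_eq_left.mp this.symm)
      have hmem : s f ∈ ({c.vtx i, c.vtx (i + 1)} : Set V) := by
        have h0 : s f ∈ ({s f, t f} : Set V) := Set.mem_insert _ _
        rwa [← hi, c.ends i, hi] at h0
      simp only [Set.mem_insert_iff, Set.mem_singleton_iff] at hmem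
      constructor
      · intro h1 h2; exact hvne (by rw [← h2, h1])
      · intro h1; tauto
    rw [flip g ig jg hg hg', flip h ih' jh hh hh']
    tauto

end Invar
section Orient

variable {V E : Type*} {s t : E → V}

lemma iff_trans_of_not_not {P Q R : Prop} (h1 : ¬(P ↔ Q)) (h2 : ¬(Q ↔ R)) : P ↔ R := by
  by_cases p : P <;> by_cases q : Q <;> by_cases r : R <;> tauto

lemma orientation_key (p : CycleSub s t) {k : ℕ} (c : GCycle s t k)
    (hcv : Set.range c.vtx = p.1.1) (hce : Set.range c.edg = p.1.2)
    {v : V} {e a b : E} {i0 ie : ZMod k}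
    (hi0 : c.vtx i0 = v) (hie : c.edg ie = e)
    (ha_def : c.edg (i0 - 1) = a) (hb_def : c.edg i0 = b)
    (hab : a ≠ b) (hea : e ≠ a) (heb : e ≠ b)
    (hva : v ∈ ({s a, t a} : Set V)) (hvb : v ∈ ({s b, t b} : Set V)) :
    ((s a = v) ↔ (s b = v)) ↔
      ¬((∃ (k' : ℕ) (c' : GCycle s t k') (i j : ZMod k'),
          Set.range c'.vtx = p.1.1 ∧ Set.range c'.edg = p.1.2 ∧
          c'.edg i = e ∧ c'.edg j = a ∧ ((s e = c'.vtx i) ↔ (s a = c'.vtx j))) ↔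
        (∃ (k' : ℕ) (c' : GCycle s t k') (i j : ZMod k'),
          Set.range c'.vtx = p.1.1 ∧ Set.range c'.edg = p.1.2 ∧
          c'.edg i = e ∧ c'.edg j = b ∧ ((s e = c'.vtx i) ↔ (s b = c'.vtx j)))) := by
  have hv : v ∈ p.1.1 := by rw [← hcv]; exact ⟨i0, hi0⟩
  have ha_mem : a ∈ p.1.2 := by rw [← hce]; exact ⟨i0 - 1, ha_def⟩
  have hb_mem : b ∈ p.1.2 := by rw [← hce]; exact ⟨i0, hb_def⟩
  have hQiff : ¬((s a = v) ↔ (s b = v)) →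
      ((∃ (k' : ℕ) (c' : GCycle s t k') (i j : ZMod k'),
          Set.range c'.vtx = p.1.1 ∧ Set.range c'.edg = p.1.2 ∧
          c'.edg i = e ∧ c'.edg j = a ∧ ((s e = c'.vtx i) ↔ (s a = c'.vtx j))) ↔
        (∃ (k' : ℕ) (c' : GCycle s t k') (i j : ZMod k'),
          Set.range c'.vtx = p.1.1 ∧ Set.range c'.edg = p.1.2 ∧
          c'.edg i = e ∧ c'.edg j = b ∧ ((s e = c'.vtx i) ↔ (s b = c'.vtx j)))) := by
    intro hσn
    constructor
    · rintro ⟨k1, c1, i1, j1, hv1, he1, h1e, h1a, hm1⟩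
      obtain ⟨j1b, h1b⟩ : ∃ j, c1.edg j = b := by
        have hmm := hb_mem; rw [← he1] at hmm; exact hmm
      obtain ⟨i01, hi01'⟩ : ∃ i, c1.vtx i = v := by
        have hmm := hv; rw [← hv1] at hmm; exact hmm
      have hstar1 := c1.star hi01' hab h1a h1b hva hvb
      have hfab : (s a = c1.vtx j1) ↔ (s b = c1.vtx j1b) := hstar1.mpr hσn
      exact ⟨k1, c1, i1, j1b, hv1, he1, h1e, h1b, hm1.trans hfab⟩
    · rintro ⟨k1, c1, i1, j1, hv1, he1, h1e, h1b, hm1⟩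
      obtain ⟨j1a, h1a⟩ : ∃ j, c1.edg j = a := by
        have hmm := ha_mem; rw [← he1] at hmm; exact hmm
      obtain ⟨i01, hi01'⟩ : ∃ i, c1.vtx i = v := by
        have hmm := hv; rw [← hv1] at hmm; exact hmm
      have hstar1 := c1.star hi01' hab h1a h1b hva hvb
      have hfab : (s a = c1.vtx j1a) ↔ (s b = c1.vtx j1) := hstar1.mpr hσn
      exact ⟨k1, c1, i1, j1a, hv1, he1, h1e, h1a, hm1.trans hfab.symm⟩
  constructor
  · -- xor direction
    intro hσ hQ
    have hstar0 := c.star hi0 hab ha_def hb_def hva hvb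
    have hx : ¬((s a = c.vtx (i0 - 1)) ↔ (s b = c.vtx i0)) := fun hL => (hstar0.mp hL) hσ
    have honeof : (∃ (k' : ℕ) (c' : GCycle s t k') (i j : ZMod k'),
          Set.range c'.vtx = p.1.1 ∧ Set.range c'.edg = p.1.2 ∧
          c'.edg i = e ∧ c'.edg j = a ∧ ((s e = c'.vtx i) ↔ (s a = c'.vtx j))) ∨
        (∃ (k' : ℕ) (c' : GCycle s t k') (i j : ZMod k'),
          Set.range c'.vtx = p.1.1 ∧ Set.range c'.edg = p.1.2 ∧
          c'.edg i = e ∧ c'.edg j = b ∧ ((s e = c'.vtx i) ↔ (s b = c'.vtx j))) := by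
      by_cases hm : (s e = c.vtx ie) ↔ (s a = c.vtx (i0 - 1))
      · exact Or.inl ⟨k, c, ie, i0 - 1, hcv, hce, hie, ha_def, hm⟩
      · exact Or.inr ⟨k, c, ie, i0, hcv, hce, hie, hb_def,
          iff_trans_of_not_not hm hx⟩
    have hQA := honeof.elim (fun h' => h') (fun h' => hQ.mpr h')
    have hQB := honeof.elim (fun h' => hQ.mp h') (fun h' => h')
    obtain ⟨k1, c1, i1e, j1a, hc1v, hc1e, h1e, h1a, hm1⟩ := hQA
    obtain ⟨k2, c2, i2e, j2b, hc2v, hc2e, h2e, h2b, hm2⟩ := hQB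
    obtain ⟨j2a, h2a⟩ : ∃ j, c2.edg j = a := by
      have hmm := ha_mem; rw [← hc2e] at hmm; exact hmm
    obtain ⟨j1b, h1b⟩ : ∃ j, c1.edg j = b := by
      have hmm := hb_mem; rw [← hc1e] at hmm; exact hmm
    have hk13 : 3 ≤ k1 := by
      refine three_le_of_distinct c1.pos (x := i1e) (y := j1a) (z := j1b) ?_ ?_ ?_
      · intro h'; exact hea (by rw [← h1e, h', h1a])
      · intro h'; exact heb (by rw [← h1e, h', h1b])
      · intro h'; exact hab (by rw [← h1a, h', h1b])
    have hinv := c1.invar c2 (hc1v.trans hc2v.symm) (hc1e.trans hc2e.symm) hk13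
      h1e h1a h2e h2a
    have hm2a : (s e = c2.vtx i2e) ↔ (s a = c2.vtx j2a) := hinv.mp hm1
    obtain ⟨i02, hi02⟩ : ∃ i, c2.vtx i = v := by
      have hmm := hv; rw [← hc2v] at hmm; exact hmm
    have hstar2 := c2.star hi02 hab h2a h2b hva hvb
    exact (hstar2.mp (hm2a.symm.trans hm2)) hσ
  · intro h'
    by_contra hσn
    exact h' (hQiff hσn)

end Orient
/-- Let `G` be a finite 3-regular graph with oriented edges and `C` the set of all
cycles of `G`.  For every vertex `v` and edge `e` not incident to `v`, the linear
map `φ : Z̃(G) → ℤ^C` with `φ(E^{e,f}) = Σ_{c ∋ e,f} ε_c^{e,f} c` kills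
`Ṽ^{v,e} = Σ_{f incident to v} δ^{v,f} E^{e,f}` (a loop at `v` contributes both of
its half-edges, with opposite signs). -/
theorem phi_vanishes_on_Vtilde {V E : Type*} [Fintype V] [Fintype E] (s t : E → V)
    (hreg : ∀ w : V,
      Nat.card {e : E // s e = w} + Nat.card {e : E // t e = w} = 3)
    (v : V) (e : E) (hse : s e ≠ v) (hte : t e ≠ v) :
    (∑ f : E, ((if s f = v then (1 : ℤ) else 0) - (if t f = v then (1 : ℤ) else 0)) •
        phiGen s t e f) = 0 := by
  funext p
  obtain ⟨k, c, hcv, hce⟩ := p.2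
  simp only [Finset.sum_apply, Pi.smul_apply, Pi.zero_apply, smul_eq_mul]
  by_cases he : e ∈ p.1.2
  swap
  · apply Finset.sum_eq_zero
    intro f _
    have h0 : phiGen s t e f p = 0 := by
      simp only [phiGen]
      exact if_neg (fun hh => he hh.1)
    rw [h0, mul_zero]
  obtain ⟨ie, hie⟩ : ∃ i, c.edg i = e := by rw [← hce] at he; exact he
  by_cases hv : v ∈ p.1.1
  swap
  · apply Finset.sum_eq_zero
    intro f _
    by_cases hf : f ∈ p.1.2
    · obtain ⟨j, hj⟩ : ∃ j, c.edg j = f := by rw [← hce] at hf; exact hf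
      have hsv : s f ∈ p.1.1 := by
        have h0 : s f ∈ ({s f, t f} : Set V) := Set.mem_insert _ _
        rw [← hj, c.ends j, hj] at h0
        rw [← hcv]
        rcases h0 with h0 | h0
        · exact h0 ▸ ⟨j, rfl⟩
        · exact h0 ▸ ⟨j + 1, rfl⟩
      have htv : t f ∈ p.1.1 := by
        have h0 : t f ∈ ({s f, t f} : Set V) := Set.mem_insert_of_mem _ rfl
        rw [← hj, c.ends j, hj] at h0
        rcases h0 with h0 | h0
        · rw [← hcv]; exact h0 ▸ ⟨j, rfl⟩
        · rw [← hcv]; exact h0 ▸ ⟨j + 1, rfl⟩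
      rw [if_neg (fun h => hv (by rwa [h] at hsv)), if_neg (fun h => hv (by rwa [h] at htv))]
      ring
    · have h0 : phiGen s t e f p = 0 := by
        simp only [phiGen]
        exact if_neg (fun hh => hf hh.2)
      rw [h0, mul_zero]
  obtain ⟨i0, hi0⟩ : ∃ i, c.vtx i = v := by rw [← hcv] at hv; exact hv
  by_cases hk2 : 2 ≤ k
  swap
  · have hk1 : k = 1 := by have := c.pos; omega
    subst hk1
    apply Finset.sum_eq_zero
    intro f _
    by_cases hf : f ∈ p.1.2
    · obtain ⟨j, hj⟩ : ∃ j, c.edg j = f := by rw [← hce] at hf; exact hf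
      have hfe : f = e := by rw [← hj, Subsingleton.elim j ie, hie]
      rw [hfe, if_neg hse, if_neg hte]
      ring
    · have h0 : phiGen s t e f p = 0 := by
        simp only [phiGen]
        exact if_neg (fun hh => hf hh.2)
      rw [h0, mul_zero]
  -- the main case
  obtain ⟨a, ha_def⟩ : ∃ a, c.edg (i0 - 1) = a := ⟨_, rfl⟩
  obtain ⟨b, hb_def⟩ : ∃ b, c.edg i0 = b := ⟨_, rfl⟩
  have h1ne : (1 : ZMod k) ≠ 0 := zmod_one_ne_zero hk2
  have hi01 : i0 - 1 ≠ i0 := fun h => h1ne (sub_eq_self.mp h)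
  have hab : a ≠ b := fun h => hi01 (c.edg_inj ((ha_def.trans h).trans hb_def.symm))
  have hsub : i0 - 1 + 1 = i0 := sub_add_cancel i0 1
  have hva : v ∈ ({s a, t a} : Set V) := by
    rw [← ha_def, c.ends (i0 - 1), hsub, hi0]
    exact Set.mem_insert_of_mem _ rfl
  have hvb : v ∈ ({s b, t b} : Set V) := by
    rw [← hb_def, c.ends i0, hi0]
    exact Set.mem_insert _ _
  have hea : e ≠ a := by
    intro h
    rw [← h] at hva
    rcases hva with h' | h'
    · exact hse h'.symm
    · exact hte h'.symm
  have heb : e ≠ b := by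
    intro h
    rw [← h] at hvb
    rcases hvb with h' | h'
    · exact hse h'.symm
    · exact hte h'.symm
  have ha_mem : a ∈ p.1.2 := by rw [← hce]; exact ⟨i0 - 1, ha_def⟩
  have hb_mem : b ∈ p.1.2 := by rw [← hce]; exact ⟨i0, hb_def⟩
  have hta : (t a = v) ↔ ¬(s a = v) := by
    have hnl : s a ≠ t a := by rw [← ha_def]; exact c.nonloop hk2 (i0 - 1)
    constructor
    · intro h1 h2; exact hnl (h2.trans h1.symm)
    · intro h1
      rcases hva with h' | h'
      · exact absurd h'.symm h1
      · exact h'.symm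
  have htb : (t b = v) ↔ ¬(s b = v) := by
    have hnl : s b ≠ t b := by rw [← hb_def]; exact c.nonloop hk2 i0
    constructor
    · intro h1 h2; exact hnl (h2.trans h1.symm)
    · intro h1
      rcases hvb with h' | h'
      · exact absurd h'.symm h1
      · exact h'.symm
  have hδ : ∀ f : E, ((t f = v) ↔ ¬(s f = v)) →
      ((if s f = v then (1 : ℤ) else 0) - (if t f = v then 1 else 0)) =
        (if s f = v then 1 else -1) := by
    intro f hf
    by_cases hsf : s f = v
    · rw [if_pos hsf, if_pos hsf, if_neg (fun h => (hf.mp h) hsf)]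
      ring
    · rw [if_neg hsf, if_neg hsf, if_pos (hf.mpr hsf)]
      ring
  rw [← Finset.sum_subset (Finset.subset_univ ({a, b} : Finset E)) ?hzero]
  case hzero =>
    intro f _ hf
    simp only [Finset.mem_insert, Finset.mem_singleton] at hf
    push_neg at hf
    by_cases hfp : f ∈ p.1.2
    · obtain ⟨j, hj⟩ : ∃ j, c.edg j = f := by rw [← hce] at hfp; exact hfp
      have hninc : v ∉ ({s f, t f} : Set V) := by
        intro hvf
        rcases c.pos_of_incident hj hi0 hvf with h' | h'
        · exact hf.2 (by rw [← hj, h', hb_def])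
        · have hji : j = i0 - 1 := by rw [← h']; ring
          exact hf.1 (by rw [← hj, hji, ha_def])
      have hs1 : s f ≠ v := fun h => hninc (h ▸ Set.mem_insert _ _)
      have hs2 : t f ≠ v := fun h => hninc (h ▸ Set.mem_insert_of_mem _ rfl)
      rw [if_neg hs1, if_neg hs2]
      ring
    · have h0 : phiGen s t e f p = 0 := by
        simp only [phiGen]
        exact if_neg (fun hh => hfp hh.2)
      rw [h0, mul_zero]
  rw [Finset.sum_pair hab]
  have hPa : phiGen s t e a p = epsSub s t p e a := by
    simp only [phiGen]
    exact if_pos ⟨he, ha_mem⟩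
  have hPb : phiGen s t e b p = epsSub s t p e b := by
    simp only [phiGen]
    exact if_pos ⟨he, hb_mem⟩
  rw [hPa, hPb, hδ a hta, hδ b htb]
  simp only [epsSub]
  exact key_arith _ _ _ _
    (orientation_key p c hcv hce hi0 hie ha_def hb_def hab hea heb hva hvb)
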